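/- If E|X| < ∞, then the complete measure of mutual dependence Q(X) = ∫_{ℝ^p} |φ_X(t) − φ_{X̃}(t)|² w₁(t) dt is finite (and nonnegative). -/

import Mathlib

open MeasureTheory ProbabilityTheory Complex Filter
open scoped RealInnerProductSpace ENNReal NNReal

noncomputable section

/-- The constant `K_q = π^{(q+1)/2} / Γ((q+1)/2)`. -/
def Kconst (q : ℕ) : ℝ :=
  Real.pi ^ ((q + 1 : ℝ) / 2) / Real.Gamma ((q + 1 : ℝ) / 2)

/-- The index set of `ℝ^p = ℝ^{p_1} × ⋯ × ℝ^{p_d}`. -/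
abbrev Idx (d : ℕ) (p : Fin d → ℕ) := (j : Fin d) × Fin (p j)

/-- The space `ℝ^p = ℝ^{p_1} × ⋯ × ℝ^{p_d}` with its Euclidean structure. -/
abbrev Vec (d : ℕ) (p : Fin d → ℕ) := EuclideanSpace ℝ (Idx d p)

/-- The `j`-th component `x_j ∈ ℝ^{p_j}` of `x ∈ ℝ^p`. -/
def comp {d : ℕ} {p : Fin d → ℕ} (x : Vec d p) (j : Fin d) :
    EuclideanSpace ℝ (Fin (p j)) := WithLp.toLp 2 (fun i => x ⟨j, i⟩)

/-- Concatenation `(y_1, …, y_d) ∈ ℝ^p` of vectors `y_j ∈ ℝ^{p_j}`. -/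
def concat {d : ℕ} {p : Fin d → ℕ}
    (y : ∀ j : Fin d, EuclideanSpace ℝ (Fin (p j))) : Vec d p := WithLp.toLp 2 (fun i : Idx d p => y i.1 i.2)

/-- The weight function `w₁(t) = (K_p |t|^{p+1})⁻¹` on `ℝ^p`. -/
def w1 (d : ℕ) (p : Fin d → ℕ) (t : Vec d p) : ℝ :=
  (Kconst (∑ j, p j) * ‖t‖ ^ (∑ j, p j + 1))⁻¹

/-- The characteristic function `φ_Y(t) = E[exp(i⟨t, Y⟩)]` of a random vector `Y`. -/
def charF {Ω : Type*} [MeasurableSpace Ω] (μ : Measure Ω) {ι : Type*} [Fintype ι]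
    (Y : Ω → EuclideanSpace ℝ ι) (t : EuclideanSpace ℝ ι) : ℂ :=
  ∫ ω, Complex.exp ((⟪t, Y ω⟫ : ℝ) * Complex.I) ∂μ

/-- The product of the marginal characteristic functions,
`φ_X̃(t) = ∏ⱼ φ_{X_j}(t_j)`. -/
def charProd {Ω : Type*} [MeasurableSpace Ω] (μ : Measure Ω) {d : ℕ} {p : Fin d → ℕ}
    (X : Ω → Vec d p) (t : Vec d p) : ℂ :=
  ∏ j, charF μ (fun ω => comp (X ω) j) (comp t j)

/-- The complete measure of mutual dependence
`Q(X) = ∫ |φ_X(t) − φ_X̃(t)|² w₁(t) dt`. -/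
def Qmeas {Ω : Type*} [MeasurableSpace Ω] (μ : Measure Ω) {d : ℕ} {p : Fin d → ℕ}
    (X : Ω → Vec d p) : ℝ :=
  ∫ t : Vec d p, ‖charF μ X t - charProd μ X t‖ ^ 2 * w1 d p t

section Aux

open Metric Set

/-- `‖e^{ix} - 1‖ ≤ |x|`. -/
lemma aux_norm_exp_mul_I_sub_one_le (x : ℝ) :
    ‖Complex.exp (x * Complex.I) - 1‖ ≤ |x| := by
  have hre : (Complex.exp (x * Complex.I) - 1).re = Real.cos x - 1 := by
    simp [Complex.exp_ofReal_mul_I_re]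
  have him : (Complex.exp (x * Complex.I) - 1).im = Real.sin x := by
    simp [Complex.exp_ofReal_mul_I_im]
  have hsq : ‖Complex.exp (x * Complex.I) - 1‖ ^ 2 = 2 - 2 * Real.cos x := by
    rw [Complex.sq_norm, Complex.normSq_apply, hre, him]
    have := Real.sin_sq_add_cos_sq x
    nlinarith
  have hble : ‖Complex.exp (x * Complex.I) - 1‖ ^ 2 ≤ |x| ^ 2 := by
    rw [hsq, _root_.sq_abs]
    have := Real.one_sub_sq_div_two_le_cos (x := x)
    nlinarith
  calc ‖Complex.exp (x * Complex.I) - 1‖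
      = Real.sqrt (‖Complex.exp (x * Complex.I) - 1‖ ^ 2) :=
        (Real.sqrt_sq (norm_nonneg _)).symm
    _ ≤ Real.sqrt (|x| ^ 2) := Real.sqrt_le_sqrt hble
    _ = |x| := Real.sqrt_sq (abs_nonneg _)

/-- If all `‖f i‖ ≤ 1`, then `‖∏ f i - 1‖ ≤ ∑ ‖f i - 1‖`. -/
lemma aux_norm_prod_sub_one_le {ι : Type*} (s : Finset ι) (f : ι → ℂ)
    (h : ∀ i ∈ s, ‖f i‖ ≤ 1) : ‖(∏ i ∈ s, f i) - 1‖ ≤ ∑ i ∈ s, ‖f i - 1‖ := by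
  induction s using Finset.cons_induction with
  | empty => simp
  | cons a s ha ih =>
    rw [Finset.prod_cons, Finset.sum_cons]
    have key : f a * (∏ i ∈ s, f i) - 1 = f a * ((∏ i ∈ s, f i) - 1) + (f a - 1) := by ring
    rw [key]
    refine (norm_add_le _ _).trans ?_
    have h2 : ‖f a * ((∏ i ∈ s, f i) - 1)‖ ≤ ‖(∏ i ∈ s, f i) - 1‖ := by
      rw [norm_mul]
      exact mul_le_of_le_one_left (norm_nonneg _) (h a (Finset.mem_cons_self a s))
    have h3 := ih fun i hi => h i (Finset.mem_cons_of_mem hi)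
    linarith

/-- Polar-coordinate criterion for finiteness of the lintegral of a radial function. -/
lemma aux_lintegral_comp_norm_lt_top {E : Type*} [NormedAddCommGroup E] [NormedSpace ℝ E]
    [MeasurableSpace E] [BorelSpace E] [FiniteDimensional ℝ E] [Nontrivial E]
    (μ : Measure E) [μ.IsAddHaarMeasure] (G : ℝ → ℝ≥0∞) (hG : Measurable G)
    (hfin : ∫⁻ r in Set.Ioi (0:ℝ),
      ENNReal.ofReal (r ^ (Module.finrank ℝ E - 1)) * G r < ⊤) :
    ∫⁻ x, G ‖x‖ ∂μ < ⊤ := by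
  set n := Module.finrank ℝ E - 1 with hn
  have h0 : ∫⁻ x, G ‖x‖ ∂μ
      = ∫⁻ x : ({0}ᶜ : Set E), G ‖(x : E)‖ ∂(Measure.comap Subtype.val μ) := by
    rw [lintegral_subtype_comap (measurableSet_singleton (0:E)).compl fun x => G ‖x‖,
      restrict_compl_singleton]
  have hGp : Measurable fun y : Metric.sphere (0:E) 1 × Set.Ioi (0:ℝ) => G y.2 :=
    hG.comp (measurable_subtype_coe.comp measurable_snd)
  have h1 : ∫⁻ x : ({0}ᶜ : Set E), G ‖(x : E)‖ ∂(Measure.comap Subtype.val μ)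
      = ∫⁻ y, G y.2 ∂(μ.toSphere.prod (Measure.volumeIoiPow n)) := by
    rw [← (μ.measurePreserving_homeomorphUnitSphereProd).lintegral_comp hGp]
    exact lintegral_congr fun x => by rw [homeomorphUnitSphereProd_apply_snd_coe]
  have h2 : ∫⁻ y, G y.2 ∂(μ.toSphere.prod (Measure.volumeIoiPow n))
      = (∫⁻ r : Set.Ioi (0:ℝ), G r ∂(Measure.volumeIoiPow n)) * μ.toSphere Set.univ := by
    rw [lintegral_prod _ hGp.aemeasurable]
    simp [lintegral_const]
  have h3 : ∫⁻ r : Set.Ioi (0:ℝ), G r ∂(Measure.volumeIoiPow n)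
      = ∫⁻ r in Set.Ioi (0:ℝ), ENNReal.ofReal (r ^ n) * G r := by
    rw [Measure.volumeIoiPow, lintegral_withDensity_eq_lintegral_mul _
      ((measurable_subtype_coe.pow_const n).ennreal_ofReal)
      (show Measurable fun r : Set.Ioi (0:ℝ) => G r from hG.comp measurable_subtype_coe)]
    simp only [Pi.mul_apply]
    exact lintegral_subtype_comap measurableSet_Ioi fun r => ENNReal.ofReal (r ^ n) * G r
  rw [h0, h1, h2, h3]
  refine ENNReal.mul_lt_top hfin ?_
  rw [Measure.toSphere_apply_univ]
  exact ENNReal.mul_lt_top (by simp) measure_ball_lt_top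

/-- The key radial majorant is integrable. -/
lemma aux_main_lintegral_lt_top {E : Type*} [NormedAddCommGroup E] [NormedSpace ℝ E]
    [MeasurableSpace E] [BorelSpace E] [FiniteDimensional ℝ E] [Nontrivial E]
    (μ : Measure E) [μ.IsAddHaarMeasure] {C K : ℝ} (hC : 0 ≤ C) (hK : 0 < K)
    {n : ℕ} (hn : n = Module.finrank ℝ E) (hn1 : 1 ≤ n) :
    ∫⁻ x, ENNReal.ofReal ((min 2 (C * ‖x‖)) ^ 2 * (K * ‖x‖ ^ (n + 1))⁻¹) ∂μ < ⊤ := by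
  set G : ℝ → ℝ≥0∞ :=
    fun r => ENNReal.ofReal ((min 2 (C * r)) ^ 2 * (K * r ^ (n + 1))⁻¹) with hGdef
  have hGm : Measurable G :=
    (((measurable_const.min (measurable_id.const_mul C)).pow_const 2).mul
      (((measurable_id.pow_const (n + 1)).const_mul K).inv)).ennreal_ofReal
  refine aux_lintegral_comp_norm_lt_top μ G hGm ?_
  rw [← hn]
  rw [← Set.Ioc_union_Ioi_eq_Ioi (zero_le_one (α := ℝ)),
    lintegral_union measurableSet_Ioi (Set.Ioc_disjoint_Ioi le_rfl)]
  refine ENNReal.add_lt_top.mpr ⟨?_, ?_⟩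
  · calc ∫⁻ r in Set.Ioc (0:ℝ) 1, ENNReal.ofReal (r ^ (n - 1)) * G r
        ≤ ∫⁻ _r in Set.Ioc (0:ℝ) 1, ENNReal.ofReal (C ^ 2 / K) := by
          refine setLIntegral_mono' measurableSet_Ioc fun r hr => ?_
          have hr0 : 0 < r := hr.1
          rw [hGdef, ← ENNReal.ofReal_mul (by positivity)]
          refine ENNReal.ofReal_le_ofReal ?_
          have h1 : (min 2 (C * r)) ^ 2 ≤ (C * r) ^ 2 :=
            pow_le_pow_left₀ (le_min (by norm_num) (by positivity)) (min_le_right _ _) 2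
          have hpow : r ^ (n - 1) * r ^ 2 = r ^ (n + 1) := by
            rw [← pow_add]; congr 1; omega
          have h2 : r ^ (n - 1) * ((C * r) ^ 2 * (K * r ^ (n + 1))⁻¹) = C ^ 2 / K := by
            rw [mul_pow, mul_inv]
            have e1 : r ^ (n - 1) * (C ^ 2 * r ^ 2 * (K⁻¹ * (r ^ (n + 1))⁻¹))
                = C ^ 2 * K⁻¹ * ((r ^ (n - 1) * r ^ 2) * (r ^ (n + 1))⁻¹) := by ring
            rw [e1, hpow, mul_inv_cancel₀ (pow_ne_zero _ hr0.ne'), mul_one, div_eq_mul_inv]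
          calc r ^ (n - 1) * ((min 2 (C * r)) ^ 2 * (K * r ^ (n + 1))⁻¹)
              ≤ r ^ (n - 1) * ((C * r) ^ 2 * (K * r ^ (n + 1))⁻¹) := by
                refine mul_le_mul_of_nonneg_left
                  (mul_le_mul_of_nonneg_right h1 (by positivity)) (by positivity)
            _ = C ^ 2 / K := h2
      _ < ⊤ := by
          rw [setLIntegral_const]
          exact ENNReal.mul_lt_top ENNReal.ofReal_lt_top
            (by rw [Real.volume_Ioc]; exact ENNReal.ofReal_lt_top)
  · calc ∫⁻ r in Set.Ioi (1:ℝ), ENNReal.ofReal (r ^ (n - 1)) * G r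
        ≤ ∫⁻ r in Set.Ioi (1:ℝ), (‖4 / K * r ^ (-2:ℝ)‖₊ : ℝ≥0∞) := by
          refine setLIntegral_mono' measurableSet_Ioi fun r hr => ?_
          have hr0 : (0:ℝ) < r := lt_trans one_pos hr
          refine le_trans ?_ (Real.ofReal_le_enorm _)
          rw [hGdef, ← ENNReal.ofReal_mul (by positivity)]
          refine ENNReal.ofReal_le_ofReal ?_
          have h1 : (min 2 (C * r)) ^ 2 ≤ 4 := by
            have h0 : (0:ℝ) ≤ min 2 (C * r) := le_min (by norm_num) (by positivity)
            calc (min 2 (C * r)) ^ 2 ≤ 2 ^ 2 := pow_le_pow_left₀ h0 (min_le_left _ _) 2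
              _ = 4 := by norm_num
          have hrpow : r ^ (-2:ℝ) = (r ^ 2)⁻¹ := by
            rw [show (-2:ℝ) = -((2:ℕ):ℝ) by norm_num, Real.rpow_neg hr0.le,
              Real.rpow_natCast]
          rw [hrpow]
          have hpow : r ^ (n + 1) = r ^ (n - 1) * r ^ 2 := by
            rw [← pow_add]; congr 1; omega
          have h2 : r ^ (n - 1) * (K * r ^ (n + 1))⁻¹ = K⁻¹ * (r ^ 2)⁻¹ := by
            rw [mul_inv, hpow, mul_inv]
            calc r ^ (n - 1) * (K⁻¹ * ((r ^ (n - 1))⁻¹ * (r ^ 2)⁻¹))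
                = (r ^ (n - 1) * (r ^ (n - 1))⁻¹) * (K⁻¹ * (r ^ 2)⁻¹) := by ring
              _ = K⁻¹ * (r ^ 2)⁻¹ := by
                  rw [mul_inv_cancel₀ (pow_ne_zero _ hr0.ne'), one_mul]
          calc r ^ (n - 1) * ((min 2 (C * r)) ^ 2 * (K * r ^ (n + 1))⁻¹)
              ≤ r ^ (n - 1) * (4 * (K * r ^ (n + 1))⁻¹) := by
                refine mul_le_mul_of_nonneg_left
                  (mul_le_mul_of_nonneg_right h1 (by positivity)) (by positivity)
            _ = 4 * (r ^ (n - 1) * (K * r ^ (n + 1))⁻¹) := by ring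
            _ = 4 / K * (r ^ 2)⁻¹ := by rw [h2]; ring
      _ < ⊤ :=
          ((integrableOn_Ioi_rpow_of_lt (by norm_num) one_pos).const_mul (4 / K)).2

/-- The component map is continuous. -/
lemma aux_continuous_comp {d : ℕ} {p : Fin d → ℕ} (j : Fin d) :
    Continuous fun t : Vec d p => comp t j :=
  LinearMap.continuous_of_finiteDimensional
    (show Vec d p →ₗ[ℝ] EuclideanSpace ℝ (Fin (p j)) from
      { toFun := fun t => comp t j
        map_add' := fun _ _ => rfl
        map_smul' := fun _ _ => rfl })

/-- The component has smaller norm. -/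
lemma aux_norm_comp_le {d : ℕ} {p : Fin d → ℕ} (x : Vec d p) (j : Fin d) :
    ‖comp x j‖ ≤ ‖x‖ := by
  rw [EuclideanSpace.norm_eq, EuclideanSpace.norm_eq]
  refine Real.sqrt_le_sqrt ?_
  have hsum : ∑ k : Idx d p, ‖x k‖ ^ 2 = ∑ j' : Fin d, ∑ i : Fin (p j'), ‖x ⟨j', i⟩‖ ^ 2 := by
    rw [← Finset.univ_sigma_univ, Finset.sum_sigma]
  rw [hsum]
  have : ∑ i : Fin (p j), ‖comp x j i‖ ^ 2 = ∑ i : Fin (p j), ‖x ⟨j, i⟩‖ ^ 2 := rfl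
  rw [this]
  exact Finset.single_le_sum (f := fun j' => ∑ i : Fin (p j'), ‖x ⟨j', i⟩‖ ^ 2)
    (fun j' _ => Finset.sum_nonneg fun i _ => sq_nonneg _) (Finset.mem_univ j)

variable {Ω : Type*} [MeasurableSpace Ω] (μ : Measure Ω) [IsProbabilityMeasure μ]
  {ι : Type*} [Fintype ι]

lemma aux_measurable_exp_inner (Y : Ω → EuclideanSpace ℝ ι) (hY : Measurable Y)
    (t : EuclideanSpace ℝ ι) :
    Measurable fun ω => Complex.exp ((⟪t, Y ω⟫ : ℝ) * Complex.I) :=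
  Complex.continuous_exp.measurable.comp
    ((Complex.measurable_ofReal.comp (measurable_const.inner hY)).mul_const Complex.I)

lemma aux_integrable_exp_inner (Y : Ω → EuclideanSpace ℝ ι) (hY : Measurable Y)
    (t : EuclideanSpace ℝ ι) :
    Integrable (fun ω => Complex.exp ((⟪t, Y ω⟫ : ℝ) * Complex.I)) μ :=
  (integrable_const (1:ℝ)).mono'
    (aux_measurable_exp_inner Y hY t).aestronglyMeasurable
    (Eventually.of_forall fun ω => le_of_eq (Complex.norm_exp_ofReal_mul_I _))

lemma aux_norm_charF_le_one (Y : Ω → EuclideanSpace ℝ ι) (t : EuclideanSpace ℝ ι) :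
    ‖charF μ Y t‖ ≤ 1 := by
  refine (norm_integral_le_integral_norm _).trans ?_
  simp only [Complex.norm_exp_ofReal_mul_I]
  simp

lemma aux_norm_charF_sub_one_le (Y : Ω → EuclideanSpace ℝ ι) (hY : Measurable Y)
    (hYint : Integrable (fun ω => ‖Y ω‖) μ) (t : EuclideanSpace ℝ ι) :
    ‖charF μ Y t - 1‖ ≤ ‖t‖ * ∫ ω, ‖Y ω‖ ∂μ := by
  have h1 : charF μ Y t - 1
      = ∫ ω, (Complex.exp ((⟪t, Y ω⟫ : ℝ) * Complex.I) - 1) ∂μ := by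
    rw [integral_sub (aux_integrable_exp_inner μ Y hY t) (integrable_const 1),
      integral_const, probReal_univ, one_smul]
    rfl
  rw [h1]
  refine (norm_integral_le_integral_norm _).trans ?_
  calc ∫ ω, ‖Complex.exp ((⟪t, Y ω⟫ : ℝ) * Complex.I) - 1‖ ∂μ
      ≤ ∫ ω, ‖t‖ * ‖Y ω‖ ∂μ := by
        refine integral_mono
          (((aux_integrable_exp_inner μ Y hY t).sub (integrable_const 1)).norm)
          (hYint.const_mul _) fun ω => ?_
        refine (aux_norm_exp_mul_I_sub_one_le _).trans ?_
        exact (abs_real_inner_le_norm t (Y ω))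
    _ = ‖t‖ * ∫ ω, ‖Y ω‖ ∂μ := by rw [integral_const_mul]
  -- integral_mul_left is for RCLike; for ℝ it works

lemma aux_continuous_charF (Y : Ω → EuclideanSpace ℝ ι) (hY : Measurable Y) :
    Continuous (charF μ Y) := by
  refine continuous_of_dominated (bound := fun _ => (1:ℝ))
    (fun t => (aux_measurable_exp_inner Y hY t).aestronglyMeasurable)
    (fun t => Eventually.of_forall fun ω =>
      le_of_eq (Complex.norm_exp_ofReal_mul_I _))
    (integrable_const 1)
    (Eventually.of_forall fun ω => ?_)
  exact Complex.continuous_exp.comp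
    ((Complex.continuous_ofReal.comp (continuous_id.inner continuous_const)).mul
      continuous_const)

end Aux

/-- If `E|X| < ∞`, then `Q(X)` is finite (the defining integrand is integrable)
and nonnegative. -/
theorem statement1 {Ω : Type*} [MeasurableSpace Ω] (μ : Measure Ω) [IsProbabilityMeasure μ]
    {d : ℕ} (hd : 1 ≤ d) {p : Fin d → ℕ} (hp : ∀ j, 1 ≤ p j)
    (X : Ω → Vec d p) (hmX : Measurable X)
    (hint : Integrable (fun ω => ‖X ω‖) μ) :
    Integrable (fun t : Vec d p => ‖charF μ X t - charProd μ X t‖ ^ 2 * w1 d p t) volume ∧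
    0 ≤ Qmeas μ X := by
  have j0 : Fin d := ⟨0, hd⟩
  have hK : 0 < Kconst (∑ j, p j) := by
    unfold Kconst
    exact div_pos (Real.rpow_pos_of_pos Real.pi_pos _)
      (Real.Gamma_pos_of_pos (by positivity))
  have hw1 : ∀ t : Vec d p, 0 ≤ w1 d p t := fun t => by
    unfold w1
    exact inv_nonneg.mpr (mul_nonneg hK.le (pow_nonneg (norm_nonneg _) _))
  have hg0 : ∀ t : Vec d p,
      0 ≤ ‖charF μ X t - charProd μ X t‖ ^ 2 * w1 d p t := fun t =>
    mul_nonneg (sq_nonneg _) (hw1 t)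
  refine ⟨?_, by unfold Qmeas; exact integral_nonneg hg0⟩
  haveI : Nonempty (Idx d p) := ⟨⟨j0, ⟨0, hp j0⟩⟩⟩
  haveI : Nontrivial (Vec d p) := by
    refine nontrivial_of_ne (EuclideanSpace.single (⟨j0, ⟨0, hp j0⟩⟩ : Idx d p) (1:ℝ)) 0 ?_
    intro h
    have h1 : ‖EuclideanSpace.single (⟨j0, ⟨0, hp j0⟩⟩ : Idx d p) (1:ℝ)‖ = 1 := by
      rw [EuclideanSpace.norm_single]; simp
    rw [h, norm_zero] at h1
    exact one_ne_zero h1.symm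
  have hfinrank : Module.finrank ℝ (Vec d p) = ∑ j, p j := by
    rw [finrank_euclideanSpace]
    simp [Fintype.card_sigma]
  have hP1 : 1 ≤ ∑ j, p j :=
    le_trans (hp j0) (Finset.single_le_sum (f := fun j => p j)
      (fun _ _ => Nat.zero_le _) (Finset.mem_univ j0))
  -- moments
  set A := ∫ ω, ‖X ω‖ ∂μ with hA
  have hA0 : 0 ≤ A := integral_nonneg fun ω => norm_nonneg _
  set C := ((d:ℝ) + 1) * A with hC
  have hC0 : 0 ≤ C := by positivity
  have hYm : ∀ j, Measurable fun ω => comp (X ω) j := fun j =>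
    (aux_continuous_comp j).measurable.comp hmX
  have hYint : ∀ j, Integrable (fun ω => ‖comp (X ω) j‖) μ := fun j =>
    hint.mono' ((hYm j).norm.aestronglyMeasurable)
      (Eventually.of_forall fun ω => by
        rw [norm_norm]; exact aux_norm_comp_le (X ω) j)
  have hAj : ∀ j, ∫ ω, ‖comp (X ω) j‖ ∂μ ≤ A := fun j =>
    integral_mono (hYint j) hint fun ω => aux_norm_comp_le (X ω) j
  -- pointwise bound
  have hb : ∀ t : Vec d p,
      ‖charF μ X t - charProd μ X t‖ ≤ min 2 (C * ‖t‖) := by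
    intro t
    refine le_min ?_ ?_
    · have h1 : ‖charProd μ X t‖ ≤ 1 := by
        unfold charProd
        rw [norm_prod]
        exact Finset.prod_le_one (fun j _ => norm_nonneg _)
          (fun j _ => aux_norm_charF_le_one μ _ _)
      calc ‖charF μ X t - charProd μ X t‖
          ≤ ‖charF μ X t‖ + ‖charProd μ X t‖ := norm_sub_le _ _
        _ ≤ 1 + 1 := add_le_add (aux_norm_charF_le_one μ _ _) h1
        _ = 2 := by norm_num
    · have key : charF μ X t - charProd μ X t
          = (charF μ X t - 1) - (charProd μ X t - 1) := by ring
      rw [key]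
      have h1 : ‖charF μ X t - 1‖ ≤ ‖t‖ * A :=
        aux_norm_charF_sub_one_le μ X hmX hint t
      have h2 : ‖charProd μ X t - 1‖ ≤ (d:ℝ) * (‖t‖ * A) := by
        unfold charProd
        refine (aux_norm_prod_sub_one_le _ _
          (fun j _ => aux_norm_charF_le_one μ _ _)).trans ?_
        calc ∑ j, ‖charF μ (fun ω => comp (X ω) j) (comp t j) - 1‖
            ≤ ∑ _j : Fin d, ‖t‖ * A := by
              refine Finset.sum_le_sum fun j _ => ?_
              refine (aux_norm_charF_sub_one_le μ _ (hYm j) (hYint j) _).trans ?_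
              exact mul_le_mul (aux_norm_comp_le t j) (hAj j)
                (integral_nonneg fun ω => norm_nonneg _) (norm_nonneg _)
          _ = (d:ℝ) * (‖t‖ * A) := by
              rw [Finset.sum_const, Finset.card_univ, Fintype.card_fin, nsmul_eq_mul]
      calc ‖(charF μ X t - 1) - (charProd μ X t - 1)‖
          ≤ ‖charF μ X t - 1‖ + ‖charProd μ X t - 1‖ := norm_sub_le _ _
        _ ≤ ‖t‖ * A + (d:ℝ) * (‖t‖ * A) := add_le_add h1 h2
        _ = C * ‖t‖ := by rw [hC]; ring
  -- measurability
  have hcont1 : Continuous (charF μ X) := aux_continuous_charF μ X hmX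
  have hcont2 : Continuous (charProd μ X) := by
    unfold charProd
    exact continuous_finset_prod _ fun j _ =>
      (aux_continuous_charF μ _ (hYm j)).comp (aux_continuous_comp j)
  have hw1m : Measurable (w1 d p) := by
    unfold w1
    exact ((measurable_norm.pow_const _).const_mul _).inv
  have hgm : AEStronglyMeasurable
      (fun t : Vec d p => ‖charF μ X t - charProd μ X t‖ ^ 2 * w1 d p t) volume :=
    (((hcont1.sub hcont2).norm.pow 2).aestronglyMeasurable).mul
      hw1m.aestronglyMeasurable
  refine ⟨hgm, ?_⟩
  -- finiteness
  refine lt_of_le_of_lt (lintegral_mono fun t => ?_)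
    (aux_main_lintegral_lt_top (volume : Measure (Vec d p)) hC0 hK
      hfinrank.symm hP1)
  rw [Real.enorm_eq_ofReal (hg0 t)]
  refine ENNReal.ofReal_le_ofReal ?_
  have hsq : ‖charF μ X t - charProd μ X t‖ ^ 2 ≤ (min 2 (C * ‖t‖)) ^ 2 :=
    pow_le_pow_left₀ (norm_nonneg _) (hb t) 2
  have hw1t : w1 d p t = (Kconst (∑ j, p j) * ‖t‖ ^ (∑ j, p j + 1))⁻¹ := rfl
  rw [hw1t]
  exact mul_le_mul_of_nonneg_right hsq
    (inv_nonneg.mpr (mul_nonneg hK.le (pow_nonneg (norm_nonneg _) _)))
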